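/- Let c > 0, α₁ ∈ ℂ and m₀ a nonnegative integer. If a nonzero polynomial h ∈ ℂ[x] satisfies x(1+cx)h'(x) = (-m₀ + α₁x)h(x), then α₁ = c(m₁ - m₀) for some nonnegative integer m₁; more precisely m₀ equals the order of vanishing of h at 0 and m₁ = m₀ + α₁/c equals the order of vanishing of h at -1/c. -/
import Mathlib
open Polynomial

lemma mul_der (u : ℂ) (n : ℕ) (q : ℂ[X]) :
    (X + C u) * derivative ((X + C u)^n * q)
      = (X + C u)^n * (C (n:ℂ) * q + (X + C u) * derivative q) := by
  rcases n with _ | k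
  · simp [derivative_mul]
  · rw [derivative_mul, derivative_pow]
    simp only [Nat.succ_sub_one, derivative_add, derivative_X, derivative_C, add_zero,
      mul_one, Nat.cast_succ]
    ring

/-- If c > 0 and a nonzero polynomial h ∈ ℂ[x] satisfies
x(1+cx)h'(x) = (-m₀+α₁x)h(x), then α₁ = c(m₁-m₀) with m₀ the order of vanishing of h
at 0 and m₁ the order of vanishing of h at -1/c. -/
theorem stmt_15 (c : ℝ) (hc : 0 < c) (α₁ : ℂ) (m₀ : ℕ) (h : Polynomial ℂ) (hne : h ≠ 0)
    (heq : X * (1 + C (c : ℂ) * X) * derivative h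
      = (C (-(m₀ : ℂ)) + C α₁ * X) * h) :
    ∃ m₁ : ℕ, α₁ = (c : ℂ) * ((m₁ : ℂ) - (m₀ : ℂ)) ∧
      m₀ = h.rootMultiplicity 0 ∧ m₁ = h.rootMultiplicity (-(1 / (c : ℂ))) := by
  have hc0 : (c : ℂ) ≠ 0 := by exact_mod_cast hc.ne'
  set n := h.rootMultiplicity 0 with hn
  set b := h.rootMultiplicity (-(1 / (c:ℂ))) with hb
  -- step 1: n = m₀ = 0
  obtain ⟨q, hq, hqd⟩ := h.exists_eq_pow_rootMultiplicity_mul_and_not_dvd hne 0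
  have hq0 : q.eval 0 ≠ 0 := by
    intro h0; exact hqd (dvd_iff_isRoot.2 h0)
  rw [C_0, sub_zero] at hq
  have key1 : (1 + C (c:ℂ) * X) * (C (n:ℂ) * q + X * derivative q)
      = (C (-(m₀:ℂ)) + C α₁ * X) * q := by
    have hX : (X : ℂ[X]) ^ n ≠ 0 := pow_ne_zero _ X_ne_zero
    apply mul_left_cancel₀ hX
    have := mul_der 0 n q
    simp only [C_0, add_zero] at this
    calc X ^ n * ((1 + C (c:ℂ) * X) * (C (n:ℂ) * q + X * derivative q))
        = (1 + C (c:ℂ) * X) * (X * derivative (X ^ n * q)) := by rw [this]; ring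
      _ = X * (1 + C (c:ℂ) * X) * derivative h := by rw [hq]; ring
      _ = (C (-(m₀:ℂ)) + C α₁ * X) * h := heq
      _ = X ^ n * ((C (-(m₀:ℂ)) + C α₁ * X) * q) := by rw [hq]; ring
  have e1 := congrArg (eval 0) key1
  simp only [eval_mul, eval_add, eval_one, eval_C, eval_X, eval_natCast, mul_zero, add_zero, zero_mul, mul_one, one_mul] at e1
  -- e1 should give n * q(0) = -m₀ * q(0)
  have hnm : (n : ℂ) = -(m₀ : ℂ) := mul_right_cancel₀ hq0 e1
  have hsum : n + m₀ = 0 := by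
    have : ((n + m₀ : ℕ) : ℂ) = 0 := by push_cast; rw [hnm]; ring
    exact_mod_cast this
  have hn0 : n = 0 := Nat.eq_zero_of_add_eq_zero_right hsum
  have hm0 : m₀ = 0 := Nat.eq_zero_of_add_eq_zero_left hsum
  -- step 2
  set u : ℂ := 1 / (c : ℂ) with hu
  have hu0 : u ≠ 0 := one_div_ne_zero hc0
  obtain ⟨p, hp, hpd⟩ := h.exists_eq_pow_rootMultiplicity_mul_and_not_dvd hne (-u)
  have hp0 : p.eval (-u) ≠ 0 := fun h0 => hpd (dvd_iff_isRoot.2 h0)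
  rw [show (X - C (-u) : ℂ[X]) = X + C u by rw [map_neg, sub_neg_eq_add]] at hp
  have hfac : (1 + C (c:ℂ) * X) = C (c:ℂ) * (X + C u) := by
    rw [mul_add, ← C_mul, hu, mul_one_div, div_self hc0, C_1]; ring
  have key2 : C (c:ℂ) * X * (C (b:ℂ) * p + (X + C u) * derivative p)
      = (C (-(m₀:ℂ)) + C α₁ * X) * p := by
    have hX : ((X + C u : ℂ[X])) ^ b ≠ 0 := by
      apply pow_ne_zero
      rw [show (X + C u : ℂ[X]) = X - C (-u) by rw [map_neg, sub_neg_eq_add]]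
      exact X_sub_C_ne_zero (-u)
    apply mul_left_cancel₀ hX
    calc (X + C u) ^ b * (C (c:ℂ) * X * (C (b:ℂ) * p + (X + C u) * derivative p))
        = C (c:ℂ) * X * ((X + C u) * derivative ((X + C u) ^ b * p)) := by
          rw [mul_der u b p]; ring
      _ = X * (1 + C (c:ℂ) * X) * derivative h := by rw [hp, hfac]; ring
      _ = (C (-(m₀:ℂ)) + C α₁ * X) * h := heq
      _ = (X + C u) ^ b * ((C (-(m₀:ℂ)) + C α₁ * X) * p) := by rw [hp]; ring
  have e2 := congrArg (eval (-u)) key2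
  simp only [eval_mul, eval_add, eval_C, eval_X, add_neg_cancel, zero_mul, add_zero] at e2
  have E2 : (c:ℂ) * (-u) * (b:ℂ) = -(m₀:ℂ) + α₁ * (-u) := by
    have := mul_right_cancel₀ hp0 (by linear_combination e2 : ((c:ℂ) * (-u) * (b:ℂ)) * p.eval (-u) = (-(m₀:ℂ) + α₁ * (-u)) * p.eval (-u))
    exact this
  refine ⟨b, ?_, hm0.trans hn0.symm, rfl⟩
  have hcu : (c:ℂ) * u = 1 := by rw [hu, mul_one_div, div_self hc0]
  have : α₁ * u = (b:ℂ) - (m₀:ℂ) := by linear_combination E2 + (b:ℂ) * hcu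
  calc α₁ = (c:ℂ) * u * α₁ := by rw [hcu, one_mul]
    _ = (c:ℂ) * ((b:ℂ) - (m₀:ℂ)) := by rw [mul_assoc, mul_comm u α₁, this]
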